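/- Let μ/ν be a skew shape with no empty rows and Hessenberg function h, let θ = (N-k,1,...,1) be a hook partition of N = |μ/ν|, and define Γ^θ_{μ/ν}(w) = (n!/|C(w)|) Σ_{w' ∈ C(w)} K_{θ, μ+δ-w'(ν+δ)} and Γ_g(w) = (n!/|C(w)|) Σ_{w' ∈ C(w)} ĝ(w') for a Hessenberg function g. Then Γ^θ_{μ/ν} = Σ_{J ⊆ [n-1], |J| = k} Γ_{h^J}, where h^J(i) = h(i)-1 if i ∈ J and μ_{h(i)} - ν_i + i - h(i) = 0, else h(i). -/

import Mathlib

open Equiv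

/-- `T i j` is the entry of a filling in row `i`, column `j` (0-based);
entries outside the diagram of `shape` are `0`.  Rows weakly increase,
columns strictly increase. -/
def IsSSYT (shape : ℕ → ℕ) (T : ℕ → ℕ → ℕ) : Prop :=
  (∀ i j, j + 1 < shape i → T i j ≤ T i (j + 1)) ∧
  (∀ i j, j < shape (i + 1) → T i j < T (i + 1) j) ∧
  (∀ i j, shape i ≤ j → T i j = 0)

/-- The Kostka number: the number of semistandard Young tableaux of the given
shape in which the entry `m` appears exactly `c m` times. -/
noncomputable def kostka (shape : ℕ → ℕ) (c : ℕ → ℕ) : ℕ :=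
  Set.ncard {T : ℕ → ℕ → ℕ | IsSSYT shape T ∧
    ∀ m : ℕ, {p : ℕ × ℕ | p.2 < shape p.1 ∧ T p.1 p.2 = m}.ncard = c m}

open Classical in
/-- Kostka number for an integer content, with the convention that it is `0`
whenever the content has a negative entry. -/
noncomputable def kostkaZ (shape : ℕ → ℕ) (c : ℕ → ℤ) : ℕ :=
  if ∀ m, 0 ≤ c m then kostka shape (fun m => (c m).toNat) else 0

/-- The hook shape `(N - k, 1, ..., 1)` with `k` trailing rows of length 1. -/
def hookShape (N k : ℕ) : ℕ → ℕ :=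
  fun i => if i = 0 then N - k else if i ≤ k then 1 else 0

/-- Extend a sequence indexed by `Fin n` to all of `ℕ` by zeros. -/
def extendSeq {n : ℕ} (a : Fin n → ℤ) : ℕ → ℤ :=
  fun m => if h : m < n then a ⟨m, h⟩ else 0

/-- The staircase `δ = (n-1, n-2, ..., 1, 0)`. -/
def deltaSeq (n : ℕ) : Fin n → ℤ := fun i => (n : ℤ) - 1 - (i.val : ℤ)

/-- The sequence `μ + δ - w(ν + δ)`, where a permutation acts on sequences by
shuffling: `(w(a))_i = a_{w⁻¹(i)}`. -/
def hatSeq {n : ℕ} (μ ν : Fin n → ℕ) (w : Perm (Fin n)) : Fin n → ℤ :=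
  fun i => ((μ i : ℤ) + deltaSeq n i) - ((ν (w⁻¹ i) : ℤ) + deltaSeq n (w⁻¹ i))

/-- `h` is the Hessenberg function of the skew shape `μ/ν`:
`h j = max { i | μ i - ν j + j - i ≥ 0 }`. -/
def IsHessOf {n : ℕ} (μ ν : Fin n → ℕ) (h : Fin n → Fin n) : Prop :=
  ∀ j : Fin n, (ν j + ((h j : ℕ)) ≤ μ (h j) + (j : ℕ)) ∧
    ∀ i : Fin n, ν j + (i : ℕ) ≤ μ i + (j : ℕ) → i ≤ h j

/-- The indicator `ĥ(w)` of the condition `w(i) ≤ h(i)` for all `i`. -/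
def hhat {n : ℕ} (h : Fin n → Fin n) (w : Perm (Fin n)) : ℕ :=
  if ∀ i, w i ≤ h i then 1 else 0

/-- The modified Hessenberg function `h^J`: `h^J(i) = h(i) - 1` when `i ∈ J` and
`μ_{h(i)} - ν_i + i - h(i) = 0`, and `h^J(i) = h(i)` otherwise. -/
def hJfun {n : ℕ} (μ ν : Fin n → ℕ) (h : Fin n → Fin n) (J : Finset (Fin n)) :
    Fin n → Fin n :=
  fun i => if i ∈ J ∧ μ (h i) + (i : ℕ) = ν i + ((h i : ℕ)) then
      ⟨(h i : ℕ) - 1, Nat.lt_of_le_of_lt (Nat.sub_le _ _) (h i).isLt⟩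
    else h i

open Classical in
/-- The conjugacy class of `w` in the symmetric group, as a finset. -/
noncomputable def conjClass {n : ℕ} (w : Perm (Fin n)) : Finset (Perm (Fin n)) :=
  Finset.univ.filter (fun v => IsConj w v)

/-- The Stanley–Stembridge character
`Γ_h(w) = (n! / |C(w)|) · Σ_{w' ∈ C(w)} ĥ(w')`. -/
noncomputable def GammaH {n : ℕ} (h : Fin n → Fin n) (w : Perm (Fin n)) : ℚ :=
  ((n.factorial : ℚ) / ((conjClass w).card : ℚ)) * ∑ v ∈ conjClass w, (hhat h v : ℚ)

/-- The immanant character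
`Γ^θ_{μ/ν}(w) = (n! / |C(w)|) · Σ_{w' ∈ C(w)} K_{θ, μ+δ-w'(ν+δ)}`. -/
noncomputable def GammaTheta {n : ℕ} (shape : ℕ → ℕ) (μ ν : Fin n → ℕ)
    (w : Perm (Fin n)) : ℚ :=
  ((n.factorial : ℚ) / ((conjClass w).card : ℚ)) *
    ∑ v ∈ conjClass w, (kostkaZ shape (extendSeq (hatSeq μ ν v)) : ℚ)

/- ## Auxiliary lemmas -/

lemma aux_count_eq_card_filter_getD (l : List ℕ) (m : ℕ) :
    l.count m = ((Finset.range l.length).filter (fun j => l.getD j 0 = m)).card := by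
  induction l with
  | nil => simp
  | cons a l ih =>
    rw [List.count_cons, ih, List.length_cons, Finset.card_filter, Finset.card_filter,
      Finset.sum_range_succ']
    simp only [List.getD_cons_succ, List.getD_cons_zero]
    congr 1
    by_cases h : a = m <;> simp [h]

def auxRowList (c : ℕ → ℕ) (n : ℕ) : List ℕ :=
  (List.range n).flatMap fun m => List.replicate (c m) m

lemma auxRowList_count (c : ℕ → ℕ) (n m : ℕ) :
    (auxRowList c n).count m = if m < n then c m else 0 := by
  induction n with
  | zero => simp [auxRowList]
  | succ n ih =>
    rw [auxRowList, List.range_succ, List.flatMap_append, List.count_append]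
    rw [auxRowList] at ih
    simp only [List.flatMap_cons, List.flatMap_nil, List.append_nil, ih,
      List.count_replicate]
    by_cases h1 : n = m
    · subst h1; simp
    · by_cases h2 : m < n
      · simp [h1, h2, Nat.lt_succ_of_lt h2]
      · have h3 : ¬ m < n + 1 := by omega
        simp [h1, h2, h3]

lemma aux_pairwise_le_replicate (c m : ℕ) :
    List.Pairwise (· ≤ ·) (List.replicate c m) := by
  induction c with
  | zero => simp
  | succ c ih =>
    rw [List.replicate_succ, List.pairwise_cons]
    exact ⟨fun b hb => (List.eq_of_mem_replicate hb).ge, ih⟩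

lemma auxRowList_sorted (c : ℕ → ℕ) (n : ℕ) : (auxRowList c n).Pairwise (· ≤ ·) := by
  induction n with
  | zero => simp [auxRowList]
  | succ n ih =>
    rw [auxRowList, List.range_succ, List.flatMap_append]
    rw [List.pairwise_append]
    refine ⟨ih, ?_, ?_⟩
    · simp only [List.flatMap_cons, List.flatMap_nil, List.append_nil]
      exact aux_pairwise_le_replicate _ _
    · intro a ha b hb
      simp only [List.flatMap_cons, List.flatMap_nil, List.append_nil] at hb
      simp only [List.mem_flatMap, List.mem_range] at ha
      obtain ⟨mm, hm, ha⟩ := ha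
      rw [List.eq_of_mem_replicate ha, List.eq_of_mem_replicate hb]
      exact Nat.le_of_lt hm

lemma auxRowList_length (c : ℕ → ℕ) (n : ℕ) :
    (auxRowList c n).length = ∑ m ∈ Finset.range n, c m := by
  induction n with
  | zero => simp [auxRowList]
  | succ n ih =>
    rw [auxRowList, List.range_succ, List.flatMap_append, List.length_append,
      Finset.sum_range_succ]
    rw [auxRowList] at ih
    simp [ih]

lemma aux_sorted_getD_mono {l : List ℕ} (hl : l.Pairwise (· ≤ ·)) {i j : ℕ}
    (hij : i ≤ j) (hj : j < l.length) : l.getD i 0 ≤ l.getD j 0 := by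
  rcases eq_or_lt_of_le hij with rfl | hij
  · exact le_refl _
  · rw [List.getD_eq_getElem _ _ (lt_trans hij hj), List.getD_eq_getElem _ _ hj]
    exact List.pairwise_iff_getElem.mp hl _ _ _ _ hij

lemma aux_downclosed_eq_range {A : Finset ℕ} (hdc : ∀ j ∈ A, ∀ i ≤ j, i ∈ A) :
    A = Finset.range A.card := by
  ext j
  simp only [Finset.mem_range]
  constructor
  · intro hj
    have : Finset.range (j + 1) ⊆ A := fun i hi =>
      hdc j hj i (Nat.lt_succ_iff.mp (Finset.mem_range.mp hi))
    have := Finset.card_le_card this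
    simpa using this
  · intro hj
    by_contra hA
    have : A ⊆ Finset.range j := by
      intro x hx
      simp only [Finset.mem_range]
      by_contra hxj
      exact hA (hdc x hx j (Nat.le_of_not_lt hxj))
    have := Finset.card_le_card this
    simp only [Finset.card_range] at this
    omega

lemma aux_step_mono {f : ℕ → ℕ} {len : ℕ} (hf : ∀ j, j + 1 < len → f j ≤ f (j + 1))
    {i j : ℕ} (hij : i ≤ j) (hj : j < len) : f i ≤ f j := by
  induction j with
  | zero =>
    have : i = 0 := by omega
    rw [this]
  | succ j ih =>
    rcases Nat.lt_succ_iff_lt_or_eq.mp (Nat.lt_succ_of_le hij) with h | rfl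
    · exact le_trans (ih (by omega) (by omega)) (hf j hj)
    · exact le_refl _

lemma aux_sorted_unique {len : ℕ} {f g : ℕ → ℕ}
    (hf : ∀ j, j + 1 < len → f j ≤ f (j + 1))
    (hg : ∀ j, j + 1 < len → g j ≤ g (j + 1))
    (hc : ∀ m, ((Finset.range len).filter (fun j => f j = m)).card
        = ((Finset.range len).filter (fun j => g j = m)).card) :
    ∀ j < len, f j = g j := by
  have hcle : ∀ m, ((Finset.range len).filter (fun j => f j ≤ m)).card
      = ((Finset.range len).filter (fun j => g j ≤ m)).card := by
    intro m
    have key : ∀ (u : ℕ → ℕ), (Finset.range len).filter (fun j => u j ≤ m)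
        = (Finset.range (m+1)).biUnion
          (fun m' => (Finset.range len).filter (fun j => u j = m')) := by
      intro u
      ext j
      simp only [Finset.mem_filter, Finset.mem_biUnion, Finset.mem_range]
      constructor
      · rintro ⟨h1, h2⟩; exact ⟨u j, by omega, h1, rfl⟩
      · rintro ⟨m', hm', h1, rfl⟩; exact ⟨h1, by omega⟩
    have hdisj : ∀ (u : ℕ → ℕ), ∀ a ∈ Finset.range (m+1), ∀ b ∈ Finset.range (m+1),
        a ≠ b → Disjoint ((Finset.range len).filter (fun j => u j = a))
          ((Finset.range len).filter (fun j => u j = b)) := by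
      intro u a _ b _ hab
      rw [Finset.disjoint_left]
      intro x hx hx'
      rw [Finset.mem_filter] at hx hx'
      exact hab (hx.2 ▸ hx'.2 ▸ rfl)
    rw [key f, key g, Finset.card_biUnion (hdisj f), Finset.card_biUnion (hdisj g)]
    exact Finset.sum_congr rfl fun m' _ => hc m'
  have hseg : ∀ (u : ℕ → ℕ), (∀ j, j + 1 < len → u j ≤ u (j + 1)) → ∀ m j, j < len →
      (u j ≤ m ↔ j < ((Finset.range len).filter (fun j => u j ≤ m)).card) := by
    intro u hu m j hj
    set A := (Finset.range len).filter (fun j => u j ≤ m) with hA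
    have hr : A = Finset.range A.card := by
      apply aux_downclosed_eq_range
      intro a ha i hia
      rw [hA, Finset.mem_filter, Finset.mem_range] at ha ⊢
      exact ⟨by omega, le_trans (aux_step_mono hu hia ha.1) ha.2⟩
    have hmem : j ∈ A ↔ j < A.card := by
      constructor
      · intro h; have := hr ▸ h; simpa using this
      · intro h; rw [hr]; simpa using h
    rw [← hmem]
    simp only [hA, Finset.mem_filter, Finset.mem_range]
    exact ⟨fun h => ⟨hj, h⟩, fun h => h.2⟩
  intro j hj
  have h1 : f j ≤ g j := by
    have := (hseg f hf (g j) j hj).mpr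
    rw [hcle (g j)] at this
    exact this ((hseg g hg (g j) j hj).mp (le_refl _))
  have h2 : g j ≤ f j := by
    have := (hseg g hg (f j) j hj).mpr
    rw [← hcle (f j)] at this
    exact this ((hseg f hf (f j) j hj).mp (le_refl _))
  omega

lemma aux_card_filter_Icc_eq_range (k : ℕ) (P : ℕ → Prop) [DecidablePred P] :
    ((Finset.Icc 1 k).filter P).card = ((Finset.range k).filter (fun j => P (j+1))).card := by
  apply Finset.card_bij' (fun i _ => i - 1) (fun j _ => j + 1) ?_ ?_ ?_ ?_
  case _ =>
    intro a ha
    simp only [Finset.mem_filter, Finset.mem_Icc] at ha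
    simp only [Finset.mem_filter, Finset.mem_range]
    refine ⟨by omega, ?_⟩
    have : a - 1 + 1 = a := by omega
    rw [this]; exact ha.2
  case _ =>
    intro a ha
    simp only [Finset.mem_filter, Finset.mem_range] at ha
    simp only [Finset.mem_filter, Finset.mem_Icc]
    exact ⟨by omega, ha.2⟩
  case _ =>
    intro a ha
    simp only [Finset.mem_filter, Finset.mem_Icc] at ha
    show a - 1 + 1 = a
    omega
  case _ =>
    intro a _
    show a + 1 - 1 = a
    omega

lemma aux_hook_content_ncard (N k : ℕ) (hNk : 1 ≤ N - k) (T : ℕ → ℕ → ℕ) (m : ℕ) :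
    {p : ℕ × ℕ | p.2 < hookShape N k p.1 ∧ T p.1 p.2 = m}.ncard
      = ((Finset.range (N-k)).filter (fun j => T 0 j = m)).card
        + ((Finset.Icc 1 k).filter (fun i => T i 0 = m)).card := by
  classical
  have hset : {p : ℕ × ℕ | p.2 < hookShape N k p.1 ∧ T p.1 p.2 = m}
      = ↑((((Finset.range (N-k)).filter (fun j => T 0 j = m)).image (fun j => ((0:ℕ), j)))
        ∪ (((Finset.Icc 1 k).filter (fun i => T i 0 = m)).image (fun i => (i, (0:ℕ))))) := by
    ext ⟨i, j⟩
    simp only [Set.mem_setOf_eq, Finset.coe_union, Set.mem_union, Finset.coe_image,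
      Set.mem_image, Finset.mem_coe, Finset.mem_filter, Finset.mem_range, Finset.mem_Icc,
      Prod.mk.injEq]
    constructor
    · rintro ⟨hshape, hT⟩
      unfold hookShape at hshape
      by_cases hi : i = 0
      · subst hi
        rw [if_pos rfl] at hshape
        exact Or.inl ⟨j, ⟨hshape, hT⟩, rfl, rfl⟩
      · rw [if_neg hi] at hshape
        by_cases hik : i ≤ k
        · rw [if_pos hik] at hshape
          have hj : j = 0 := by omega
          subst hj
          exact Or.inr ⟨i, ⟨⟨by omega, hik⟩, hT⟩, rfl, rfl⟩
        · rw [if_neg hik] at hshape; omega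
    · rintro (⟨j', ⟨hj', hT⟩, h1, h2⟩ | ⟨i', ⟨⟨hi1, hi2⟩, hT⟩, h1, h2⟩)
      · subst h1; subst h2
        exact ⟨by unfold hookShape; simpa using hj', hT⟩
      · subst h1; subst h2
        refine ⟨?_, hT⟩
        unfold hookShape
        rw [if_neg (by omega), if_pos hi2]
        omega
  rw [hset, Set.ncard_coe_finset, Finset.card_union_of_disjoint,
    Finset.card_image_of_injective, Finset.card_image_of_injective]
  · intro a b hab; simpa using hab
  · intro a b hab; simpa using hab
  · rw [Finset.disjoint_left]
    rintro ⟨i, j⟩ h1 h2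
    simp only [Finset.mem_image, Finset.mem_filter, Finset.mem_Icc, Prod.mk.injEq] at h1 h2
    obtain ⟨j', _, hj1, _⟩ := h1
    obtain ⟨i', ⟨⟨hi1, _⟩, _⟩, hi2, _⟩ := h2
    omega

lemma aux_step_strict {f : ℕ → ℕ} {len : ℕ} (hf : ∀ j, j + 1 ≤ len → f j < f (j + 1))
    {i j : ℕ} (hij : i < j) (hj : j ≤ len) : f i < f j := by
  induction j with
  | zero => omega
  | succ j ih =>
    rcases Nat.lt_succ_iff_lt_or_eq.mp hij with h | rfl
    · exact lt_trans (ih h (by omega)) (hf j hj)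
    · exact hf i hj

noncomputable def hookRowContent (c : ℕ → ℕ) (K : Finset ℕ) : ℕ → ℕ :=
  fun m => c m - (if m ∈ K then 1 else 0)

noncomputable def hookFill (N k n : ℕ) (c : ℕ → ℕ) (K : Finset ℕ) : ℕ → ℕ → ℕ :=
  fun i j => if i = 0 then
      (if j < N - k then (auxRowList (hookRowContent c K) n).getD j 0 else 0)
    else if i ≤ k ∧ j = 0 then (K.sort (· ≤ ·)).getD (i-1) 0 else 0

lemma hookFill_row (N k n : ℕ) (c : ℕ → ℕ) (K : Finset ℕ) (j : ℕ) :
    hookFill N k n c K 0 j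
      = if j < N - k then (auxRowList (hookRowContent c K) n).getD j 0 else 0 := by
  unfold hookFill
  rw [if_pos rfl]

lemma hookFill_col (N k n : ℕ) (c : ℕ → ℕ) (K : Finset ℕ) (i : ℕ)
    (h1 : i ≠ 0) (h2 : i ≤ k) :
    hookFill N k n c K i 0 = (K.sort (· ≤ ·)).getD (i-1) 0 := by
  unfold hookFill
  rw [if_neg h1, if_pos ⟨h2, rfl⟩]

lemma hookFill_other (N k n : ℕ) (c : ℕ → ℕ) (K : Finset ℕ) (i j : ℕ)
    (h1 : i ≠ 0) (h2 : ¬ (i ≤ k ∧ j = 0)) :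
    hookFill N k n c K i j = 0 := by
  unfold hookFill
  rw [if_neg h1, if_neg h2]

lemma kostka_hook (N k n : ℕ) (c : ℕ → ℕ) (hsupp : ∀ m, n ≤ m → c m = 0)
    (hsum : ∑ m ∈ Finset.range n, c m = N) (hk : k < N) :
    kostka (hookShape N k) c
      = Nat.choose ((((Finset.range n).filter (fun m => 0 < c m)).card) - 1) k := by
  classical
  set S := (Finset.range n).filter (fun m => 0 < c m) with hSdef
  have hmemS : ∀ m, m ∈ S ↔ 0 < c m := by
    intro m
    rw [hSdef, Finset.mem_filter, Finset.mem_range]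
    refine ⟨fun h => h.2, fun h => ⟨?_, h⟩⟩
    by_contra hn
    exact absurd (hsupp m (le_of_not_gt hn)) (by omega)
  have hSne : S.Nonempty := by
    by_contra h
    rw [Finset.not_nonempty_iff_eq_empty] at h
    have : ∑ m ∈ Finset.range n, c m = 0 := Finset.sum_eq_zero (fun m hm => by
      by_contra hc
      have hmS : m ∈ S := (hmemS m).mpr (Nat.pos_of_ne_zero hc)
      rw [h] at hmS
      exact absurd hmS (Finset.notMem_empty m))
    omega
  set m0 := S.min' hSne with hm0def
  have hm0S : m0 ∈ S := S.min'_mem hSne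
  have hm0min : ∀ m ∈ S, m0 ≤ m := fun m hm => S.min'_le m hm
  have hm0c : 0 < c m0 := (hmemS m0).mp hm0S
  have hNk1 : 1 ≤ N - k := by omega
  set P := Finset.powersetCard k (S.erase m0) with hPdef
  have hKfacts : ∀ K ∈ P, K ⊆ S.erase m0 ∧ K.card = k := by
    intro K hK
    rw [hPdef, Finset.mem_powersetCard] at hK
    exact hK
  have hKel : ∀ K, K ⊆ S.erase m0 → ∀ m ∈ K, m < n ∧ 0 < c m ∧ m0 < m := by
    intro K hKsub m hm
    have h1 := hKsub hm
    rw [Finset.mem_erase] at h1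
    have hS := h1.2
    refine ⟨?_, (hmemS m).mp hS, lt_of_le_of_ne (hm0min m hS) (Ne.symm h1.1)⟩
    rw [hSdef, Finset.mem_filter, Finset.mem_range] at hS
    exact hS.1
  have hccsum : ∀ K, K ⊆ S.erase m0 → K.card = k →
      ∑ m ∈ Finset.range n, hookRowContent c K m = N - k := by
    intro K hKsub hKcard
    unfold hookRowContent
    have hle : ∀ m ∈ Finset.range n, (if m ∈ K then 1 else 0) ≤ c m := by
      intro m _
      by_cases hm : m ∈ K
      · rw [if_pos hm]; exact (hKel K hKsub m hm).2.1
      · rw [if_neg hm]; exact Nat.zero_le _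
    rw [Finset.sum_tsub_distrib (Finset.range n) hle, hsum]
    congr 1
    rw [← Finset.card_filter]
    have : (Finset.range n).filter (· ∈ K) = K := by
      apply Finset.Subset.antisymm
      · intro x hx; exact (Finset.mem_filter.mp hx).2
      · intro x hx
        exact Finset.mem_filter.mpr ⟨Finset.mem_range.mpr (hKel K hKsub x hx).1, hx⟩
    rw [this, hKcard]
  have hLfacts : ∀ K, K ⊆ S.erase m0 → K.card = k →
      (auxRowList (hookRowContent c K) n).length = N - k ∧
      (∀ m, (auxRowList (hookRowContent c K) n).count m = hookRowContent c K m) ∧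
      (auxRowList (hookRowContent c K) n).getD 0 0 = m0 := by
    intro K hKsub hKcard
    have hm0K : m0 ∉ K := fun h => absurd rfl (Finset.mem_erase.mp (hKsub h)).1
    have hLlen : (auxRowList (hookRowContent c K) n).length = N - k := by
      rw [auxRowList_length, hccsum K hKsub hKcard]
    have hLcount : ∀ m, (auxRowList (hookRowContent c K) n).count m
        = hookRowContent c K m := by
      intro m
      rw [auxRowList_count]
      by_cases h : m < n
      · rw [if_pos h]
      · rw [if_neg h]
        unfold hookRowContent
        rw [hsupp m (le_of_not_gt h)]
        simp
    refine ⟨hLlen, hLcount, ?_⟩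
    have hm0L : m0 ∈ auxRowList (hookRowContent c K) n := by
      rw [← List.count_pos_iff, hLcount]
      unfold hookRowContent
      rw [if_neg hm0K]
      omega
    obtain ⟨idx, hidx, hidx2⟩ := List.getElem_of_mem hm0L
    have le1 : (auxRowList (hookRowContent c K) n).getD 0 0 ≤ m0 := by
      have := aux_sorted_getD_mono (auxRowList_sorted (hookRowContent c K) n)
        (Nat.zero_le idx) hidx
      rwa [List.getD_eq_getElem _ _ hidx, hidx2] at this
    have le2 : m0 ≤ (auxRowList (hookRowContent c K) n).getD 0 0 := by
      have h0 : 0 < (auxRowList (hookRowContent c K) n).length := by omega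
      have hmem : (auxRowList (hookRowContent c K) n).getD 0 0
          ∈ auxRowList (hookRowContent c K) n := by
        rw [List.getD_eq_getElem _ _ h0]
        exact List.getElem_mem h0
      have : 0 < c ((auxRowList (hookRowContent c K) n).getD 0 0) := by
        have hpos := List.count_pos_iff.mpr hmem
        rw [hLcount] at hpos
        have hle : hookRowContent c K ((auxRowList (hookRowContent c K) n).getD 0 0)
            ≤ c ((auxRowList (hookRowContent c K) n).getD 0 0) := Nat.sub_le _ _
        omega
      exact hm0min _ ((hmemS _).mpr this)
    omega
  have hmem_fill : ∀ K ∈ P, IsSSYT (hookShape N k) (hookFill N k n c K) ∧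
      ∀ m : ℕ, {p : ℕ × ℕ | p.2 < hookShape N k p.1 ∧
        hookFill N k n c K p.1 p.2 = m}.ncard = c m := by
    intro K hK
    obtain ⟨hKsub, hKcard⟩ := hKfacts K hK
    obtain ⟨hLlen, hLcount, hL0⟩ := hLfacts K hKsub hKcard
    have hLsort := auxRowList_sorted (hookRowContent c K) n
    have hCLlen : (K.sort (· ≤ ·)).length = k := by
      rw [Finset.length_sort, hKcard]
    constructor
    · refine ⟨?_, ?_, ?_⟩
      · intro i j hj
        unfold hookShape at hj
        by_cases hi : i = 0
        · subst hi
          rw [if_pos rfl] at hj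
          rw [hookFill_row, hookFill_row, if_pos (by omega : j < N - k), if_pos hj]
          exact aux_sorted_getD_mono hLsort (by omega) (by omega)
        · rw [if_neg hi] at hj
          split_ifs at hj <;> omega
      · intro i j hj
        unfold hookShape at hj
        rw [if_neg (by omega : ¬ (i + 1 = 0))] at hj
        by_cases hik : i + 1 ≤ k
        · rw [if_pos hik] at hj
          have hj0 : j = 0 := by omega
          subst hj0
          rw [hookFill_col N k n c K (i+1) (by omega) hik]
          by_cases hi : i = 0
          · subst hi
            rw [hookFill_row, if_pos (by omega : 0 < N - k), hL0]
            have h0k : 0 < (K.sort (· ≤ ·)).length := by omega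
            have hmem : (K.sort (· ≤ ·)).getD (0 + 1 - 1) 0 ∈ K := by
              rw [List.getD_eq_getElem _ _ (by omega)]
              exact (Finset.mem_sort (· ≤ ·)).mp (List.getElem_mem (by omega))
            exact (hKel K hKsub _ hmem).2.2
          · rw [hookFill_col N k n c K i hi (by omega)]
            have h1 : i - 1 < (K.sort (· ≤ ·)).length := by omega
            have h2 : i + 1 - 1 < (K.sort (· ≤ ·)).length := by omega
            rw [List.getD_eq_getElem _ _ h1, List.getD_eq_getElem _ _ h2]
            exact (Finset.sortedLT_sort K).getElem_lt_getElem_iff.mpr (by omega)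
        · rw [if_neg hik] at hj; omega
      · intro i j hij
        unfold hookShape at hij
        by_cases hi : i = 0
        · subst hi
          rw [if_pos rfl] at hij
          rw [hookFill_row, if_neg (by omega)]
        · rw [if_neg hi] at hij
          refine hookFill_other N k n c K i j hi ?_
          rintro ⟨hik, rfl⟩
          rw [if_pos hik] at hij
          omega
    · intro m
      rw [aux_hook_content_ncard N k hNk1]
      have hrow : ((Finset.range (N-k)).filter
          (fun j => hookFill N k n c K 0 j = m)).card = hookRowContent c K m := by
        have hfc : Finset.filter (fun j => hookFill N k n c K 0 j = m) (Finset.range (N-k))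
            = Finset.filter (fun j => (auxRowList (hookRowContent c K) n).getD j 0 = m)
              (Finset.range (N-k)) := by
          apply Finset.filter_congr
          intro j hj
          rw [Finset.mem_range] at hj
          rw [hookFill_row, if_pos hj]
        rw [hfc, ← hLlen, ← aux_count_eq_card_filter_getD, hLcount]
      have hcol : ((Finset.Icc 1 k).filter
          (fun i => hookFill N k n c K i 0 = m)).card = (if m ∈ K then 1 else 0) := by
        have hfc : Finset.filter (fun i => hookFill N k n c K i 0 = m) (Finset.Icc 1 k)
            = Finset.filter (fun i => (K.sort (· ≤ ·)).getD (i-1) 0 = m)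
              (Finset.Icc 1 k) := by
          apply Finset.filter_congr
          intro i hi
          rw [Finset.mem_Icc] at hi
          rw [hookFill_col N k n c K i (by omega) hi.2]
        rw [hfc, aux_card_filter_Icc_eq_range]
        simp only [Nat.add_sub_cancel]
        rw [← hCLlen, ← aux_count_eq_card_filter_getD]
        by_cases hm : m ∈ K
        · rw [if_pos hm]
          exact List.count_eq_one_of_mem (Finset.sort_nodup _ _)
            ((Finset.mem_sort _).mpr hm)
        · rw [if_neg hm]
          exact List.count_eq_zero_of_not_mem (fun h => hm ((Finset.mem_sort _).mp h))
      rw [hrow, hcol]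
      unfold hookRowContent
      by_cases hm : m ∈ K
      · have := (hKel K hKsub m hm).2.1
        simp only [if_pos hm]
        omega
      · simp only [if_neg hm]
        omega
  have himg : {T : ℕ → ℕ → ℕ | IsSSYT (hookShape N k) T ∧
      ∀ m : ℕ, {p : ℕ × ℕ | p.2 < hookShape N k p.1 ∧ T p.1 p.2 = m}.ncard = c m}
      = (hookFill N k n c) '' ↑P := by
    apply Set.Subset.antisymm
    · rintro T ⟨hssyt, hcont⟩
      have hcont' : ∀ m, ((Finset.range (N-k)).filter (fun j => T 0 j = m)).card
          + ((Finset.Icc 1 k).filter (fun i => T i 0 = m)).card = c m := by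
        intro m
        rw [← aux_hook_content_ncard N k hNk1 T m]
        exact hcont m
      have hcolstrict : ∀ i i', i < i' → i' ≤ k → T i 0 < T i' 0 := by
        intro i i' h hik
        refine aux_step_strict (f := fun i => T i 0) (len := k) (fun j hj => ?_) h hik
        refine hssyt.2.1 j 0 ?_
        unfold hookShape
        rw [if_neg (by omega), if_pos hj]
        omega
      have hvalS : ∀ i, 1 ≤ i → i ≤ k → T i 0 ∈ S := by
        intro i h1 h2
        rw [hmemS]
        have hpos : 0 < ((Finset.Icc 1 k).filter (fun i' => T i' 0 = T i 0)).card := by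
          rw [Finset.card_pos]
          exact ⟨i, Finset.mem_filter.mpr ⟨Finset.mem_Icc.mpr ⟨h1, h2⟩, rfl⟩⟩
        have := hcont' (T i 0)
        omega
      have hT00S : T 0 0 ∈ S := by
        rw [hmemS]
        have hpos : 0 < ((Finset.range (N-k)).filter (fun j => T 0 j = T 0 0)).card := by
          rw [Finset.card_pos]
          exact ⟨0, Finset.mem_filter.mpr ⟨Finset.mem_range.mpr (by omega), rfl⟩⟩
        have := hcont' (T 0 0)
        omega
      have hvalgt : ∀ i, 1 ≤ i → i ≤ k → m0 < T i 0 := fun i h1 h2 =>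
        lt_of_le_of_lt (hm0min _ hT00S) (hcolstrict 0 i h1 h2)
      have hKTsub : (Finset.Icc 1 k).image (fun i => T i 0) ⊆ S.erase m0 := by
        intro m hm
        rw [Finset.mem_image] at hm
        obtain ⟨i, hi, rfl⟩ := hm
        rw [Finset.mem_Icc] at hi
        exact Finset.mem_erase.mpr ⟨(hvalgt i hi.1 hi.2).ne', hvalS i hi.1 hi.2⟩
      have hKTcard : ((Finset.Icc 1 k).image (fun i => T i 0)).card = k := by
        rw [Finset.card_image_of_injOn, Nat.card_Icc]
        · omega
        · intro a ha b hb hab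
          rw [Finset.mem_coe, Finset.mem_Icc] at ha hb
          by_contra hne
          rcases Nat.lt_or_ge a b with h | h
          · exact absurd hab (Nat.ne_of_lt (hcolstrict a b h hb.2))
          · have hba : b < a := by omega
            exact absurd hab.symm (Nat.ne_of_lt (hcolstrict b a hba ha.2))
      have hKTP : (Finset.Icc 1 k).image (fun i => T i 0) ∈ P := by
        rw [hPdef, Finset.mem_powersetCard]
        exact ⟨hKTsub, hKTcard⟩
      set KT := (Finset.Icc 1 k).image (fun i => T i 0) with hKTdef
      obtain ⟨hLlen, hLcount, hL0⟩ := hLfacts KT hKTsub hKTcard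
      have hLsort := auxRowList_sorted (hookRowContent c KT) n
      have hLTlen : ((List.range k).map (fun j => T (j+1) 0)).length = k := by simp
      have hLTget : ∀ j, j < k →
          ((List.range k).map (fun j => T (j+1) 0)).getD j 0 = T (j+1) 0 := by
        intro j hj
        rw [List.getD_eq_getElem _ _ (by simpa using hj)]
        simp
      have hLTsortlt : ((List.range k).map (fun j => T (j+1) 0)).Pairwise (· < ·) := by
        rw [List.pairwise_iff_getElem]
        intro a b ha hb hab
        simp only [List.length_map, List.length_range] at ha hb
        simp only [List.getElem_map, List.getElem_range]
        exact hcolstrict (a+1) (b+1) (by omega) (by omega)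
      have hLTnodup : ((List.range k).map (fun j => T (j+1) 0)).Nodup :=
        hLTsortlt.nodup
      have hLTfin : ((List.range k).map (fun j => T (j+1) 0)).toFinset = KT := by
        ext m
        rw [List.mem_toFinset, hKTdef, Finset.mem_image, List.mem_map]
        constructor
        · rintro ⟨j, hj, rfl⟩
          rw [List.mem_range] at hj
          exact ⟨j+1, Finset.mem_Icc.mpr ⟨by omega, by omega⟩, rfl⟩
        · rintro ⟨i, hi, rfl⟩
          rw [Finset.mem_Icc] at hi
          refine ⟨i-1, List.mem_range.mpr (by omega), ?_⟩
          congr 1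
          omega
      have hsortKT : KT.sort (· ≤ ·) = (List.range k).map (fun j => T (j+1) 0) := by
        refine List.Perm.eq_of_pairwise' (Finset.pairwise_sort _ _) (hLTsortlt.imp le_of_lt)
          (List.perm_of_nodup_nodup_toFinset_eq (Finset.sort_nodup _ _) hLTnodup ?_)
        rw [Finset.sort_toFinset, hLTfin]
      have hcolT : ∀ m, ((Finset.Icc 1 k).filter (fun i => T i 0 = m)).card
          = (if m ∈ KT then 1 else 0) := by
        intro m
        rw [aux_card_filter_Icc_eq_range]
        have heq : ((Finset.range k).filter (fun j => T (j+1) 0 = m)).card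
            = ((List.range k).map (fun j => T (j+1) 0)).count m := by
          rw [aux_count_eq_card_filter_getD, hLTlen]
          congr 1
          apply Finset.filter_congr
          intro j hj
          rw [Finset.mem_range] at hj
          rw [hLTget j hj]
        rw [heq]
        by_cases hm : m ∈ KT
        · rw [if_pos hm]
          refine List.count_eq_one_of_mem hLTnodup ?_
          rw [← hLTfin, List.mem_toFinset] at hm
          exact hm
        · rw [if_neg hm]
          refine List.count_eq_zero_of_not_mem (fun h => hm ?_)
          rw [← hLTfin, List.mem_toFinset]
          exact h
      have hrowT : ∀ m, ((Finset.range (N-k)).filter (fun j => T 0 j = m)).card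
          = hookRowContent c KT m := by
        intro m
        have h1 := hcont' m
        rw [hcolT m] at h1
        unfold hookRowContent
        by_cases hm : m ∈ KT
        · simp only [if_pos hm] at h1 ⊢
          omega
        · simp only [if_neg hm] at h1 ⊢
          omega
      have hroweq : ∀ j, j < N - k →
          T 0 j = (auxRowList (hookRowContent c KT) n).getD j 0 := by
        refine aux_sorted_unique (fun j hj => ?_) (fun j hj => ?_) (fun m => ?_)
        · refine hssyt.1 0 j ?_
          unfold hookShape
          rw [if_pos rfl]
          exact hj
        · exact aux_sorted_getD_mono hLsort (by omega) (by omega)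
        · rw [hrowT m, ← hLcount m, aux_count_eq_card_filter_getD, hLlen]
      refine ⟨KT, by rw [Finset.mem_coe]; exact hKTP, ?_⟩
      symm
      funext i j
      by_cases hi : i = 0
      · subst hi
        rw [hookFill_row]
        by_cases hj : j < N - k
        · rw [if_pos hj]
          exact hroweq j hj
        · rw [if_neg hj]
          refine hssyt.2.2 0 j ?_
          unfold hookShape
          rw [if_pos rfl]
          omega
      · by_cases hcond : i ≤ k ∧ j = 0
        · obtain ⟨hik, rfl⟩ := hcond
          rw [hookFill_col N k n c KT i hi hik, hsortKT, hLTget (i-1) (by omega)]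
          have : i - 1 + 1 = i := by omega
          rw [this]
        · rw [hookFill_other N k n c KT i j hi hcond]
          refine hssyt.2.2 i j ?_
          unfold hookShape
          rw [if_neg hi]
          rcases Classical.em (i ≤ k) with h | h
          · rw [if_pos h]
            have : j ≠ 0 := fun hj => hcond ⟨h, hj⟩
            omega
          · rw [if_neg h]
            omega
    · rintro T ⟨K, hK, rfl⟩
      exact hmem_fill K (by rwa [Finset.mem_coe] at hK)
  have hinj : Set.InjOn (hookFill N k n c) ↑P := by
    intro K1 hK1 K2 hK2 hf
    rw [Finset.mem_coe] at hK1 hK2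
    have hc1 := (hKfacts K1 hK1).2
    have hc2 := (hKfacts K2 hK2).2
    have hlen : (K1.sort (· ≤ ·)).length = (K2.sort (· ≤ ·)).length := by
      rw [Finset.length_sort, Finset.length_sort, hc1, hc2]
    have hsorteq : K1.sort (· ≤ ·) = K2.sort (· ≤ ·) := by
      apply List.ext_getElem hlen
      intro j h1 h2
      have hjk : j < k := by rwa [Finset.length_sort, hc1] at h1
      have e1 : hookFill N k n c K1 (j+1) 0 = (K1.sort (· ≤ ·)).getD j 0 := by
        rw [hookFill_col N k n c K1 (j+1) (by omega) (by omega)]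
        norm_num
      have e2 : hookFill N k n c K2 (j+1) 0 = (K2.sort (· ≤ ·)).getD j 0 := by
        rw [hookFill_col N k n c K2 (j+1) (by omega) (by omega)]
        norm_num
      have := e1.symm.trans (by rw [hf, e2])
      rwa [List.getD_eq_getElem _ _ h1, List.getD_eq_getElem _ _ h2] at this
    have := congrArg List.toFinset hsorteq
    rwa [Finset.sort_toFinset, Finset.sort_toFinset] at this
  rw [kostka, himg, Set.ncard_image_of_injOn hinj, Set.ncard_coe_finset, hPdef,
    Finset.card_powersetCard, Finset.card_erase_of_mem hm0S]

theorem stmt9_pointwise {n N k : ℕ} (μ ν : Fin n → ℕ) (hμ : Antitone μ)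
    (hlt : ∀ i, ν i < μ i) (hN : N = ∑ i : Fin n, (μ i - ν i)) (hk : k < N)
    (h : Fin n → Fin n) (hh : IsHessOf μ ν h) (v : Perm (Fin n)) :
    kostkaZ (hookShape N k) (extendSeq (hatSeq μ ν v))
      = ∑ J ∈ Finset.univ.filter (fun J : Finset (Fin n) =>
          (∀ i ∈ J, (i : ℕ) < n - 1) ∧ J.card = k),
        hhat (hJfun μ ν h J) v := by
  classical
  have hn : 0 < n := by
    rcases Nat.eq_zero_or_pos n with rfl | hp
    · simp at hN; omega
    · exact hp
  -- basic Hessenberg facts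
  have hstrict : ∀ i i' : Fin n, i < i' → μ i' + (i : ℕ) < μ i + (i' : ℕ) := by
    intro i i' hii
    have h1 : μ i' ≤ μ i := hμ (le_of_lt hii)
    have h2 : (i : ℕ) < (i' : ℕ) := hii
    omega
  have hHle : ∀ j i : Fin n, (ν j + (i : ℕ) ≤ μ i + (j : ℕ)) ↔ i ≤ h j := by
    intro j i
    constructor
    · exact (hh j).2 i
    · intro hle
      have h1 : (i : ℕ) ≤ ((h j : Fin n) : ℕ) := hle
      have h2 := (hh j).1
      have h3 : μ (h j) ≤ μ i := hμ hle
      omega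
  have hgej : ∀ j : Fin n, j ≤ h j := by
    intro j
    refine (hHle j j).mp ?_
    have := (hlt j).le
    omega
  -- E facts
  have hE : ∀ i : Fin n, μ (h i) + (i : ℕ) = ν i + ((h i : ℕ)) →
      (i : ℕ) < n - 1 ∧ 1 ≤ ((h i : ℕ)) := by
    intro i hEi
    have hi1 := hgej i
    have hi2 : (i : ℕ) ≤ ((h i) : ℕ) := hi1
    constructor
    · by_contra hc
      have hieq : (i : ℕ) = n - 1 := by have := i.isLt; omega
      have hhi : ((h i) : ℕ) = (i : ℕ) := by have := (h i).isLt; omega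
      have : h i = i := Fin.ext hhi
      rw [this] at hEi
      have := hlt i
      omega
    · by_contra hc
      have hhi0 : ((h i) : ℕ) = 0 := by omega
      have hi0 : (i : ℕ) = 0 := by omega
      have : h i = i := Fin.ext (by omega)
      rw [this] at hEi
      have := hlt i
      omega
  -- hat value lemmas
  have hatval : ∀ j : Fin n, hatSeq μ ν v (v j)
      = ((μ (v j) : ℤ) + ((j : ℕ) : ℤ)) - ((ν j : ℤ) + (((v j : ℕ)) : ℤ)) := by
    intro j
    unfold hatSeq deltaSeq
    rw [show v⁻¹ (v j) = j from v.symm_apply_apply j]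
    have := j.isLt
    have := (v j).isLt
    push_cast
    omega
  have hatnn : ∀ j : Fin n, (0 ≤ hatSeq μ ν v (v j)) ↔ v j ≤ h j := by
    intro j
    rw [hatval j, ← hHle j (v j)]
    constructor
    · intro hge; omega
    · intro hle
      have : ν j + ((v j : ℕ)) ≤ μ (v j) + (j : ℕ) := hle
      push_cast
      omega
  have hatzero : ∀ j : Fin n, (hatSeq μ ν v (v j) = 0) ↔
      (v j = h j ∧ μ (h j) + (j : ℕ) = ν j + ((h j : ℕ))) := by
    intro j
    rw [hatval j]
    constructor
    · intro heq
      have heqN : μ (v j) + (j : ℕ) = ν j + ((v j : ℕ)) := by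
        have := j.isLt; have := (v j).isLt
        omega
      have hle : v j ≤ h j := (hHle j (v j)).mp (by omega)
      have hveq : v j = h j := by
        by_contra hne
        have hltv : v j < h j := lt_of_le_of_ne hle hne
        have := hstrict (v j) (h j) hltv
        have := (hh j).1
        omega
      refine ⟨hveq, ?_⟩
      rw [hveq] at heqN
      omega
    · rintro ⟨h1, h2⟩
      rw [h1]
      push_cast
      omega
  by_cases hv : ∀ j, v j ≤ h j
  · -- nonnegative case
    have hnn : ∀ i : Fin n, 0 ≤ hatSeq μ ν v i := by
      intro i
      have : i = v (v⁻¹ i) := (v.apply_symm_apply i).symm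
      rw [this]
      exact (hatnn (v⁻¹ i)).mpr (hv _)
    have hposall : ∀ m, 0 ≤ extendSeq (hatSeq μ ν v) m := by
      intro m
      unfold extendSeq
      by_cases hm : m < n
      · rw [dif_pos hm]; exact hnn _
      · rw [dif_neg hm]
    rw [kostkaZ, if_pos hposall]
    set c : ℕ → ℕ := fun m => (extendSeq (hatSeq μ ν v) m).toNat with hcdef
    have hcsupp : ∀ m, n ≤ m → c m = 0 := by
      intro m hm
      rw [hcdef]
      simp only [extendSeq, dif_neg (by omega : ¬ m < n)]
      rfl
    have hcfin : ∀ i : Fin n, (c (i : ℕ) : ℤ) = hatSeq μ ν v i := by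
      intro i
      rw [hcdef]
      simp only [extendSeq, dif_pos i.isLt, Fin.eta]
      exact Int.toNat_of_nonneg (hnn i)
    have hcsum : ∑ m ∈ Finset.range n, c m = N := by
      have hz : (↑(∑ m ∈ Finset.range n, c m) : ℤ) = (N : ℤ) := by
        push_cast
        rw [← Fin.sum_univ_eq_sum_range (fun m => (c m : ℤ)) n]
        calc ∑ i : Fin n, (c (i : ℕ) : ℤ) = ∑ i : Fin n, hatSeq μ ν v i := by
              exact Finset.sum_congr rfl (fun i _ => hcfin i)
          _ = ∑ i : Fin n, ((μ i : ℤ) + deltaSeq n i)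
              - ∑ i : Fin n, ((ν (v⁻¹ i) : ℤ) + deltaSeq n (v⁻¹ i)) := by
              rw [← Finset.sum_sub_distrib]; rfl
          _ = ∑ i : Fin n, ((μ i : ℤ) + deltaSeq n i)
              - ∑ i : Fin n, ((ν i : ℤ) + deltaSeq n i) := by
              congr 1
              exact Equiv.sum_comp (v⁻¹ : Perm (Fin n)) (fun i => ((ν i : ℤ) + deltaSeq n i))
          _ = ∑ i : Fin n, ((μ i : ℤ) - (ν i : ℤ)) := by
              rw [← Finset.sum_sub_distrib]
              apply Finset.sum_congr rfl
              intro i _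
              ring
          _ = (N : ℤ) := by
              rw [hN]
              push_cast
              apply Finset.sum_congr rfl
              intro i _
              have := hlt i
              omega
      exact_mod_cast hz
    rw [kostka_hook N k n c hcsupp hcsum hk]
    -- now count
    set Z := Finset.univ.filter (fun j : Fin n =>
      v j = h j ∧ μ (h j) + (j : ℕ) = ν j + ((h j : ℕ))) with hZdef
    set U := Finset.univ.filter (fun i : Fin n => (i : ℕ) < n - 1) with hUdef
    have hZU : Z ⊆ U := by
      intro i hi
      rw [hZdef, Finset.mem_filter] at hi
      rw [hUdef, Finset.mem_filter]
      exact ⟨Finset.mem_univ _, (hE i hi.2.2).1⟩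
    have hUcard : U.card = n - 1 := by
      rw [hUdef, Finset.card_filter,
        Fin.sum_univ_eq_sum_range (fun m => if m < n - 1 then 1 else 0) n,
        ← Finset.card_filter]
      have hre : (Finset.range n).filter (fun m => m < n - 1) = Finset.range (n-1) := by
        ext m
        simp only [Finset.mem_filter, Finset.mem_range]
        omega
      rw [hre, Finset.card_range]
    -- RHS as a cardinality
    have hiff : ∀ J : Finset (Fin n), (∀ i, v i ≤ hJfun μ ν h J i) ↔ Disjoint J Z := by
      intro J
      constructor
      · intro hall
        rw [Finset.disjoint_left]
        intro i hiJ hiZ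
        rw [hZdef, Finset.mem_filter] at hiZ
        obtain ⟨_, hveq, hEi⟩ := hiZ
        have hcond : i ∈ J ∧ μ (h i) + (i : ℕ) = ν i + ((h i : ℕ)) := ⟨hiJ, hEi⟩
        have hle := hall i
        unfold hJfun at hle
        rw [if_pos hcond] at hle
        have h1 : ((v i : ℕ)) ≤ ((h i : ℕ)) - 1 := hle
        have h2 : ((v i : ℕ)) = ((h i : ℕ)) := congrArg Fin.val hveq
        have h3 := (hE i hEi).2
        omega
      · intro hd i
        unfold hJfun
        by_cases hc : i ∈ J ∧ μ (h i) + (i : ℕ) = ν i + ((h i : ℕ))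
        · rw [if_pos hc]
          have h1 : v i ≤ h i := hv i
          have h2 : v i ≠ h i := by
            intro heq
            have hiZ : i ∈ Z := by
              rw [hZdef, Finset.mem_filter]
              exact ⟨Finset.mem_univ _, heq, hc.2⟩
            exact (Finset.disjoint_left.mp hd hc.1) hiZ
          have h3 : ((v i : ℕ)) < ((h i : ℕ)) :=
            lt_of_le_of_ne h1 (fun hval => h2 (Fin.ext hval))
          show ((v i : ℕ)) ≤ ((h i : ℕ)) - 1
          omega
        · rw [if_neg hc]
          exact hv i
    have hRHS : ∑ J ∈ Finset.univ.filter (fun J : Finset (Fin n) =>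
          (∀ i ∈ J, (i : ℕ) < n - 1) ∧ J.card = k), hhat (hJfun μ ν h J) v
        = (Finset.powersetCard k (U \ Z)).card := by
      have hJset : Finset.powersetCard k (U \ Z)
          = (Finset.univ.filter (fun J : Finset (Fin n) =>
              (∀ i ∈ J, (i : ℕ) < n - 1) ∧ J.card = k)).filter
              (fun J => Disjoint J Z) := by
        ext J
        rw [Finset.mem_powersetCard, Finset.mem_filter, Finset.mem_filter]
        constructor
        · rintro ⟨hsub, hcard⟩
          refine ⟨⟨Finset.mem_univ _, ?_, hcard⟩, ?_⟩
          · intro i hi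
            have := hsub hi
            rw [Finset.mem_sdiff, hUdef, Finset.mem_filter] at this
            exact this.1.2
          · rw [Finset.disjoint_left]
            intro i hi
            have := hsub hi
            rw [Finset.mem_sdiff] at this
            exact this.2
        · rintro ⟨⟨_, hJU, hcard⟩, hdisj⟩
          refine ⟨?_, hcard⟩
          intro i hi
          rw [Finset.mem_sdiff, hUdef, Finset.mem_filter]
          exact ⟨⟨Finset.mem_univ _, hJU i hi⟩, Finset.disjoint_left.mp hdisj hi⟩
      rw [hJset, Finset.card_filter]
      apply Finset.sum_congr rfl
      intro J _
      unfold hhat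
      by_cases hd : Disjoint J Z
      · rw [if_pos ((hiff J).mpr hd), if_pos hd]
      · rw [if_neg (fun hall => hd ((hiff J).mp hall)), if_neg hd]
    rw [hRHS, Finset.card_powersetCard]
    -- cardinality bookkeeping
    have hZzero : Z.card = (Finset.univ.filter
        (fun i : Fin n => hatSeq μ ν v i = 0)).card := by
      apply Finset.card_bij (fun j _ => v j)
      · intro j hj
        rw [hZdef, Finset.mem_filter] at hj
        rw [Finset.mem_filter]
        exact ⟨Finset.mem_univ _, (hatzero j).mpr hj.2⟩
      · intro a _ b _ hab
        exact v.injective hab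
      · intro i hi
        rw [Finset.mem_filter] at hi
        refine ⟨v⁻¹ i, ?_, v.apply_symm_apply i⟩
        rw [hZdef, Finset.mem_filter]
        refine ⟨Finset.mem_univ _, (hatzero (v⁻¹ i)).mp ?_⟩
        rw [show v (v⁻¹ i) = i from v.apply_symm_apply i]
        exact hi.2
    have hscount : ((Finset.range n).filter (fun m => 0 < c m)).card + Z.card = n := by
      rw [hZzero, Finset.card_filter, Finset.card_filter,
        ← Fin.sum_univ_eq_sum_range (fun m => if 0 < c m then 1 else 0) n,
        ← Finset.sum_add_distrib]
      have hpt : ∀ i : Fin n, ((if 0 < c ((i : ℕ)) then 1 else 0)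
          + (if hatSeq μ ν v i = 0 then 1 else 0)) = 1 := by
        intro i
        have h1 := hcfin i
        have h2 := hnn i
        by_cases hz : hatSeq μ ν v i = 0
        · rw [if_pos hz, if_neg (by omega : ¬ 0 < c ((i : ℕ)))]
        · have : 0 < c ((i : ℕ)) := by omega
          rw [if_pos this, if_neg hz]
      rw [Finset.sum_congr rfl (fun i _ => hpt i)]
      simp
    have hZle : Z.card ≤ n - 1 := hUcard ▸ Finset.card_le_card hZU
    have hUZ : (U \ Z).card = n - 1 - Z.card := by
      rw [Finset.card_sdiff_of_subset hZU, hUcard]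
    rw [hUZ]
    congr 1
    omega
  · -- negative case: both sides are zero
    push_neg at hv
    obtain ⟨j, hj⟩ := hv
    have hneg : ¬ (∀ m, 0 ≤ extendSeq (hatSeq μ ν v) m) := by
      intro hpos
      have h0 := hpos ((v j : ℕ))
      unfold extendSeq at h0
      rw [dif_pos (v j).isLt, Fin.eta] at h0
      exact absurd ((hatnn j).mp h0) (not_le.mpr hj)
    rw [kostkaZ, if_neg hneg]
    symm
    apply Finset.sum_eq_zero
    intro J _
    unfold hhat
    rw [if_neg]
    intro hall
    have hthis := hall j
    unfold hJfun at hthis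
    refine absurd ?_ (not_le.mpr hj)
    by_cases hc : j ∈ J ∧ μ (h j) + (j : ℕ) = ν j + ((h j : ℕ))
    · rw [if_pos hc] at hthis
      have h1 : ((v j : ℕ)) ≤ ((h j : ℕ)) - 1 := hthis
      have h2 : ((v j : ℕ)) ≤ ((h j : ℕ)) := by omega
      exact h2
    · rwa [if_neg hc] at hthis

/-- Corollary 4.3, first part: for a hook `θ = (N-k,1,...,1)`,
`Γ^θ_{μ/ν} = Σ_{J ⊆ [n-1], |J| = k} Γ_{h^J}`. -/
theorem stmt9 {n N k : ℕ} (μ ν : Fin n → ℕ) (hμ : Antitone μ) (hν : Antitone ν)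
    (hlt : ∀ i, ν i < μ i) (hN : N = ∑ i : Fin n, (μ i - ν i)) (hk : k < N)
    (h : Fin n → Fin n) (hh : IsHessOf μ ν h) (w : Perm (Fin n)) :
    GammaTheta (hookShape N k) μ ν w =
      ∑ J ∈ Finset.univ.filter (fun J : Finset (Fin n) =>
          (∀ i ∈ J, (i : ℕ) < n - 1) ∧ J.card = k),
        GammaH (hJfun μ ν h J) w := by
  unfold GammaTheta GammaH
  rw [← Finset.mul_sum]
  congr 1
  rw [Finset.sum_comm]
  apply Finset.sum_congr rfl
  intro v _
  rw [stmt9_pointwise μ ν hμ hlt hN hk h hh v]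
  push_cast
  rfl
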